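/- In the Mrówka space Ψ = ω ∪ 𝒜 of a maximal almost-disjoint family 𝒜, the set 𝒜 is closed and discrete, and every countably infinite subset of 𝒜 is σ-compact and is a spoke at infinity: adjoining the point at infinity ⋆ of the one-point compactification to it yields a subspace in which ⋆ has a neighbourhood base well-ordered by reverse inclusion. -/

import Mathlib

open Filter Topology Set

universe u v

/-- `x` has a neighbourhood base in the subspace `S` well-ordered by reverse inclusion. -/
def HasWONhdsBase {X : Type u} [TopologicalSpace X] (x : X) (S : Set X) : Prop :=
  ∃ (o : Ordinal.{u}) (B : ↥(Set.Iio o) → Set X),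
    (∀ i, B i ⊆ S) ∧ (∀ i j, i ≤ j → B j ⊆ B i) ∧
    (𝓝[S] x).HasBasis (fun _ => True) B

/-- `X` is radial at `x`. -/
def RadialAt (X : Type u) [TopologicalSpace X] (x : X) : Prop :=
  ∀ A : Set X, x ∈ closure A →
    ∃ (o : Ordinal.{u}) (f : ↥(Set.Iio o) → X), o ≠ 0 ∧
      (∀ i, f i ∈ A) ∧ Filter.Tendsto f Filter.atTop (𝓝 x)

/-- The underlying type of the Mrówka space of an almost-disjoint family on ℕ. -/
def Mrowka (𝒜 : Set (Set ℕ)) : Type := ℕ ⊕ ↥𝒜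

/-- The isolated points. -/
def Mrowka.nat {𝒜 : Set (Set ℕ)} (n : ℕ) : Mrowka 𝒜 := Sum.inl n

/-- The points corresponding to members of the family. -/
def Mrowka.pt {𝒜 : Set (Set ℕ)} (A : ↥𝒜) : Mrowka 𝒜 := Sum.inr A

/-- The Mrówka (Isbell–Mrówka, Ψ) topology: points of ℕ are isolated and each A ∈ 𝒜 has
neighbourhood base {A} ∪ (A \ F) for finite F. -/
instance (𝒜 : Set (Set ℕ)) : TopologicalSpace (Mrowka 𝒜) :=
  TopologicalSpace.generateFrom
    ({U : Set (Mrowka 𝒜) | ∃ n : ℕ, U = {Mrowka.nat n}} ∪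
     {U : Set (Mrowka 𝒜) | ∃ (A : ↥𝒜) (F : Set ℕ), F.Finite ∧
        U = {Mrowka.pt A} ∪ Mrowka.nat '' (A.1 \ F)})

/-- `𝒜` is a maximal almost-disjoint family of infinite subsets of ℕ. -/
def IsMad (𝒜 : Set (Set ℕ)) : Prop :=
  (∀ A ∈ 𝒜, A.Infinite) ∧ (∀ A ∈ 𝒜, ∀ B ∈ 𝒜, A ≠ B → (A ∩ B).Finite) ∧
  (∀ S : Set ℕ, S.Infinite → ∃ A ∈ 𝒜, (S ∩ A).Infinite)

section Aux

variable {𝒜 : Set (Set ℕ)}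

lemma Mrowka.pt_injective : Function.Injective (Mrowka.pt (𝒜 := 𝒜)) :=
  fun _ _ h => Sum.inr_injective h

lemma Mrowka.nat_ne_pt {n : ℕ} {A : ↥𝒜} : Mrowka.nat n ≠ Mrowka.pt A :=
  Sum.inl_ne_inr

lemma Mrowka.cases' (x : Mrowka 𝒜) : (∃ n, x = Mrowka.nat n) ∨ ∃ A, x = Mrowka.pt A :=
  match x with
  | Sum.inl n => Or.inl ⟨n, rfl⟩
  | Sum.inr A => Or.inr ⟨A, rfl⟩

lemma Mrowka.isOpen_nat_singleton (n : ℕ) : IsOpen ({Mrowka.nat n} : Set (Mrowka 𝒜)) :=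
  TopologicalSpace.isOpen_generateFrom_of_mem (Or.inl ⟨n, rfl⟩)

lemma Mrowka.isOpen_ptNbhd (A : ↥𝒜) {F : Set ℕ} (hF : F.Finite) :
    IsOpen ({Mrowka.pt A} ∪ Mrowka.nat '' (A.1 \ F)) :=
  TopologicalSpace.isOpen_generateFrom_of_mem (Or.inr ⟨A, F, hF, rfl⟩)

lemma Mrowka.isOpen_range_nat : IsOpen (range (Mrowka.nat (𝒜 := 𝒜))) := by
  rw [← Set.iUnion_singleton_eq_range]
  exact isOpen_iUnion fun n => Mrowka.isOpen_nat_singleton n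

lemma Mrowka.compl_range_pt : (range (Mrowka.pt (𝒜 := 𝒜)))ᶜ = range Mrowka.nat := by
  ext x
  constructor
  · intro hx
    rcases Mrowka.cases' x with ⟨n, rfl⟩ | ⟨A, rfl⟩
    · exact ⟨n, rfl⟩
    · exact absurd ⟨A, rfl⟩ hx
  · rintro ⟨n, rfl⟩ ⟨A, hA⟩
    exact Mrowka.nat_ne_pt hA.symm

lemma Mrowka.isClosed_range_pt : IsClosed (range (Mrowka.pt (𝒜 := 𝒜))) := by
  rw [← isOpen_compl_iff, Mrowka.compl_range_pt]
  exact Mrowka.isOpen_range_nat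

lemma Mrowka.isClosed_subset_pt {C : Set (Mrowka 𝒜)} (hC : C ⊆ range Mrowka.pt) :
    IsClosed C := by
  rw [← isOpen_compl_iff, isOpen_iff_forall_mem_open]
  intro x hx
  have hnat : ∀ m : ℕ, (Mrowka.nat m : Mrowka 𝒜) ∉ C := by
    intro m hm
    rcases hC hm with ⟨A, hA⟩
    exact Mrowka.nat_ne_pt hA.symm
  rcases Mrowka.cases' x with ⟨n, rfl⟩ | ⟨A, rfl⟩
  · refine ⟨{Mrowka.nat n}, ?_, Mrowka.isOpen_nat_singleton n, rfl⟩
    rintro y rfl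
    exact hnat n
  · refine ⟨{Mrowka.pt A} ∪ Mrowka.nat '' (A.1 \ ∅), ?_,
      Mrowka.isOpen_ptNbhd A finite_empty, Or.inl rfl⟩
    rintro y (rfl | ⟨m, -, rfl⟩)
    · exact hx
    · exact hnat m

lemma Mrowka.finite_of_compact_subset_pt {K : Set (Mrowka 𝒜)} (hK : IsCompact K)
    (hsub : K ⊆ range Mrowka.pt) : K.Finite := by
  have hcov : K ⊆ ⋃ A : ↥𝒜, ({Mrowka.pt A} ∪ Mrowka.nat '' (A.1 \ ∅)) := by
    intro x hx
    rcases hsub hx with ⟨A, rfl⟩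
    exact mem_iUnion.2 ⟨A, Or.inl rfl⟩
  obtain ⟨t, ht⟩ := hK.elim_finite_subcover _
    (fun A : ↥𝒜 => Mrowka.isOpen_ptNbhd A finite_empty) hcov
  apply Set.Finite.subset (t.finite_toSet.image Mrowka.pt)
  intro x hx
  rcases hsub hx with ⟨A, rfl⟩
  rcases mem_iUnion₂.1 (ht hx) with ⟨B, hB, hxB⟩
  rcases hxB with h | ⟨m, -, hm⟩
  · exact ⟨B, hB, h.symm⟩
  · exact absurd hm Mrowka.nat_ne_pt

lemma Mrowka.discrete_pt : DiscreteTopology ↥(range (Mrowka.pt (𝒜 := 𝒜))) := by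
  rw [discreteTopology_iff_isOpen_singleton]
  rintro ⟨x, A, rfl⟩
  rw [isOpen_induced_iff]
  refine ⟨{Mrowka.pt A} ∪ Mrowka.nat '' (A.1 \ ∅), Mrowka.isOpen_ptNbhd A finite_empty, ?_⟩
  ext y
  simp only [mem_preimage, mem_singleton_iff]
  constructor
  · rintro (hy | ⟨m, -, hm⟩)
    · exact Subtype.ext hy
    · exact absurd (hm ▸ y.2) (by rintro ⟨B, hB⟩; exact Mrowka.nat_ne_pt hB.symm)
  · rintro rfl
    exact Or.inl rfl

end Aux

theorem stmt10 (𝒜 : Set (Set ℕ)) (h : IsMad 𝒜) :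
    IsClosed (Set.range (Mrowka.pt (𝒜 := 𝒜))) ∧
    DiscreteTopology ↥(Set.range (Mrowka.pt (𝒜 := 𝒜))) ∧
    ∀ T : Set ↥𝒜, T.Countable → T.Infinite →
      IsSigmaCompact (Mrowka.pt '' T) ∧
      HasWONhdsBase (OnePoint.infty : OnePoint (Mrowka 𝒜))
        (OnePoint.some '' (Mrowka.pt '' T) ∪ {OnePoint.infty}) := by
  refine ⟨Mrowka.isClosed_range_pt, Mrowka.discrete_pt, fun T hc hi => ⟨?_, ?_⟩⟩
  · -- σ-compactness
    have hne : (Mrowka.pt '' T).Nonempty := hi.nonempty.image _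
    obtain ⟨g, hg⟩ := Set.Countable.exists_eq_range (hc.image _) hne
    refine ⟨fun n => {g n}, fun n => isCompact_singleton, ?_⟩
    rw [hg, Set.iUnion_singleton_eq_range]
  · -- spoke at infinity
    have hcT : Countable ↥T := hc.to_subtype
    have hiT : Infinite ↥T := hi.to_subtype
    obtain ⟨d⟩ := nonempty_denumerable ↥T
    let e : ℕ ≃ ↥T := (@Denumerable.eqv ↥T d).symm
    let f : ℕ → ↥𝒜 := fun n => ((e n : ↥T) : ↥𝒜)
    have hfT : ∀ n, f n ∈ T := fun n => (e n).2
    have hfinj : Function.Injective f := fun a b hab => e.injective (Subtype.ext hab)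
    have hsurj : ∀ A ∈ T, ∃ m, f m = A := by
      intro A hA
      refine ⟨e.symm ⟨A, hA⟩, ?_⟩
      show ((e (e.symm ⟨A, hA⟩) : ↥T) : ↥𝒜) = A
      rw [e.apply_symm_apply]
    set S : Set (OnePoint (Mrowka 𝒜)) :=
      OnePoint.some '' (Mrowka.pt '' T) ∪ {OnePoint.infty} with hS
    set B : ↥(Set.Iio Ordinal.omega0.{0}) → Set (OnePoint (Mrowka 𝒜)) := fun i =>
      insert OnePoint.infty
        ((fun m => (OnePoint.some (Mrowka.pt (f m)))) '' {m : ℕ | i.1 ≤ (m : Ordinal)}) with hB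
    refine ⟨Ordinal.omega0, B, ?_, ?_, ?_⟩
    · rintro i x (rfl | ⟨m, -, rfl⟩)
      · exact Or.inr rfl
      · exact Or.inl ⟨_, ⟨f m, hfT m, rfl⟩, rfl⟩
    · rintro i j hij x (rfl | ⟨m, hm, rfl⟩)
      · exact mem_insert _ _
      · exact Or.inr ⟨m, le_trans (Subtype.coe_le_coe.mpr hij) hm, rfl⟩
    · have hb := (OnePoint.hasBasis_nhds_infty (X := Mrowka 𝒜)).inf_principal S
      constructor
      intro t
      rw [show (𝓝[S] (OnePoint.infty : OnePoint (Mrowka 𝒜))) = 𝓝 OnePoint.infty ⊓ 𝓟 S from rfl,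
        hb.mem_iff]
      constructor
      · rintro ⟨K, ⟨hKcl, hKcpt⟩, hKt⟩
        have h1 : (K ∩ range Mrowka.pt).Finite :=
          Mrowka.finite_of_compact_subset_pt (hKcpt.inter_right Mrowka.isClosed_range_pt)
            inter_subset_right
        have hfin : {m : ℕ | Mrowka.pt (f m) ∈ K}.Finite := by
          have hsub : {m : ℕ | Mrowka.pt (f m) ∈ K} ⊆
              (fun m => Mrowka.pt (f m)) ⁻¹' (K ∩ range Mrowka.pt) :=
            fun m hm => ⟨hm, f m, rfl⟩
          exact Set.Finite.subset
            (h1.preimage ((Mrowka.pt_injective.comp hfinj).injOn)) hsub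
        obtain ⟨n₀, hn₀⟩ := hfin.bddAbove
        refine ⟨⟨((n₀ + 1 : ℕ) : Ordinal), Ordinal.nat_lt_omega0 _⟩, trivial, ?_⟩
        intro x hx
        apply hKt
        rcases hx with rfl | ⟨m, hm, rfl⟩
        · exact ⟨Or.inr rfl, Or.inr rfl⟩
        · have hm' : n₀ + 1 ≤ m := by
            have hm2 : ((n₀ + 1 : ℕ) : Ordinal) ≤ (m : Ordinal) := hm
            exact_mod_cast hm2
          have hK : Mrowka.pt (f m) ∉ K := fun hKm => by
            have := hn₀ hKm
            omega
          exact ⟨Or.inl ⟨_, hK, rfl⟩, Or.inl ⟨_, ⟨f m, hfT m, rfl⟩, rfl⟩⟩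
      · rintro ⟨i, -, hit⟩
        obtain ⟨n, hn⟩ := Ordinal.lt_omega0.mp i.2
        refine ⟨Mrowka.pt '' (f '' Set.Iio n),
          ⟨Mrowka.isClosed_subset_pt (image_subset_range _ _),
            (((Set.finite_Iio n).image f).image _).isCompact⟩,
          subset_trans ?_ hit⟩
        rintro x ⟨hx1, hx2⟩
        rcases hx2 with ⟨y, ⟨A, hA, rfl⟩, rfl⟩ | rfl
        · obtain ⟨m, rfl⟩ := hsurj A hA
          rcases hx1 with ⟨z, hz, hzx⟩ | hxI
          · have hz' : z = Mrowka.pt (f m) := OnePoint.coe_eq_coe.mp hzx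
            subst hz'
            refine Or.inr ⟨m, ?_, rfl⟩
            show i.1 ≤ (m : Ordinal)
            rw [hn]
            refine Nat.cast_le.mpr ?_
            by_contra hlt
            push_neg at hlt
            exact hz ⟨f m, ⟨m, hlt, rfl⟩, rfl⟩
          · exact absurd hxI (OnePoint.coe_ne_infty _)
        · exact mem_insert _ _
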